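/- For any integer n ≥ 5, let G be an edge-colored complete 3-uniform hypergraph K_n^{(3)} that is rainbow 𝒯-free and uses at least 3 colors, say |C(G)| = k ≥ 3. Then, after renumbering the colors as 1,2,...,k, the vertex set V(G) can be partitioned into k−1 parts V_2, V_3, ..., V_k such that for every i ∈ {2,3,...,k} one has {i} ⊆ C(V_i) ⊆ {1, i} (i.e., every edge contained in V_i has color 1 or i, and at least one edge contained in V_i has color i), and every edge not entirely contained in a single part has color 1. -/

import Mathlib

/-- The set of colors appearing on the (3-element) edges of an edge-colored `K_n^{(3)}`. -/
def colorFinset {n : ℕ} (c : Finset (Fin n) → ℕ) : Finset ℕ :=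
  (Finset.powersetCard 3 (Finset.univ : Finset (Fin n))).image c

/-- There is a rainbow tight path `𝒯` (edges `v₁v₂v₃, v₂v₃v₄, v₃v₄v₅`). -/
def HasRainbowTight {n : ℕ} (c : Finset (Fin n) → ℕ) : Prop :=
  ∃ v : Fin 5 → Fin n, Function.Injective v ∧
    c {v 0, v 1, v 2} ≠ c {v 1, v 2, v 3} ∧
    c {v 0, v 1, v 2} ≠ c {v 2, v 3, v 4} ∧
    c {v 1, v 2, v 3} ≠ c {v 2, v 3, v 4}

namespace TPS

variable {n : ℕ} {c : Finset (Fin n) → ℕ}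

/-- unordered edge -/
def E (a b d : Fin n) : Finset (Fin n) := {a, b, d}

lemma Eperm1 (a b d : Fin n) : E b a d = E a b d := by ext x; simp [E]; tauto
lemma Eperm2 (a b d : Fin n) : E a d b = E a b d := by ext x; simp [E]; tauto
lemma Eperm3 (a b d : Fin n) : E d a b = E a b d := by ext x; simp [E]; tauto
lemma Eperm4 (a b d : Fin n) : E b d a = E a b d := by ext x; simp [E]; tauto
lemma Eperm5 (a b d : Fin n) : E d b a = E a b d := by ext x; simp [E]; tauto

lemma E_card {a b d : Fin n} (hab : a ≠ b) (had : a ≠ d) (hbd : b ≠ d) :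
    (E a b d).card = 3 :=
  Finset.card_eq_three.mpr ⟨a, b, d, hab, had, hbd, rfl⟩

lemma path5 (hfree : ¬ HasRainbowTight c) {a b d e f : Fin n}
    (h1 : a ≠ b) (h2 : a ≠ d) (h3 : a ≠ e) (h4 : a ≠ f)
    (h5 : b ≠ d) (h6 : b ≠ e) (h7 : b ≠ f)
    (h8 : d ≠ e) (h9 : d ≠ f) (h10 : e ≠ f) :
    c (E a b d) = c (E b d e) ∨ c (E a b d) = c (E d e f) ∨
      c (E b d e) = c (E d e f) := by
  by_contra hcon
  push_neg at hcon
  refine hfree ⟨![a, b, d, e, f], ?_, ?_, ?_, ?_⟩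
  · intro i j hij
    fin_cases i <;> fin_cases j <;> simp_all
  · simpa [E] using hcon.1
  · simpa [E] using hcon.2.1
  · simpa [E] using hcon.2.2



/-- Pair lemma: a pair of vertices sees at most two colors. -/
lemma Plem (hfree : ¬ HasRainbowTight c) {a b x y z : Fin n}
    (hab : a ≠ b) (hxa : x ≠ a) (hxb : x ≠ b) (hya : y ≠ a) (hyb : y ≠ b)
    (hza : z ≠ a) (hzb : z ≠ b)
    (hxy : c (E a b x) ≠ c (E a b y)) (hxz : c (E a b x) ≠ c (E a b z))
    (hyz : c (E a b y) ≠ c (E a b z)) : False := by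
  have hxy' : x ≠ y := fun h => hxy (by rw [h])
  have hxz' : x ≠ z := fun h => hxz (by rw [h])
  have hyz' : y ≠ z := fun h => hyz (by rw [h])
  -- S1 : c (E a x z) ∈ {α, β}
  have S1 := path5 hfree hyb hya hxy'.symm hyz' hab.symm hxb.symm
    hzb.symm hxa.symm hza.symm hxz'
  rw [Eperm5 a b y, Eperm1 a b x] at S1
  -- S1 : c (E a b y) = c (E a b x) ∨ c (E a b y) = c (E a x z) ∨ c (E a b x) = c (E a x z)
  have S2 := path5 hfree hyb hya hyz' hxy'.symm hab.symm hzb.symm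
    hxb.symm hza.symm hxa.symm hxz'.symm
  rw [Eperm5 a b y, Eperm1 a b z, Eperm2 a x z] at S2
  have hB : c (E a x z) = c (E a b y) := by
    rcases S1 with h | h | h
    · exact absurd h.symm hxy
    · exact h.symm
    · rcases S2 with h2 | h2 | h2
      · exact absurd h2 hyz
      · exact h2.symm
      · exact absurd (h.trans h2.symm) hxz
  have S3 := path5 hfree hza hzb hyz'.symm hxz'.symm hab hya.symm
    hxa.symm hyb.symm hxb.symm hxy'.symm
  rw [Eperm3 a b z, Eperm2 b x y] at S3
  have S4 := path5 hfree hza hzb hxz'.symm hyz'.symm hab hxa.symm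
    hya.symm hxb.symm hyb.symm hxy'
  rw [Eperm3 a b z] at S4
  have hD : c (E b x y) = c (E a b z) := by
    rcases S4 with h | h | h
    · exact absurd h.symm hxz
    · exact h.symm
    · rcases S3 with h2 | h2 | h2
      · exact absurd h2.symm hyz
      · exact h2.symm
      · exact absurd (h.trans h2.symm) hxy
  have S5 := path5 hfree hza hxz'.symm hzb hyz'.symm hxa.symm hab hya.symm
    hxb hxy' hyb.symm
  rw [Eperm3 a x z, Eperm2 a b x, Eperm1 b x y, hB, hD] at S5
  rcases S5 with h | h | h
  · exact hxy h.symm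
  · exact hyz h
  · exact hxz h



/-- bichromatic pair -/
def Bi (c : Finset (Fin n) → ℕ) (a b : Fin n) (α β : ℕ) : Prop :=
  a ≠ b ∧ α ≠ β ∧ (∃ x, x ≠ a ∧ x ≠ b ∧ c (E a b x) = α) ∧
    (∃ y, y ≠ a ∧ y ≠ b ∧ c (E a b y) = β)

lemma Bi.symm_c {a b : Fin n} {α β : ℕ} (h : Bi c a b α β) : Bi c a b β α :=
  ⟨h.1, h.2.1.symm, h.2.2.2, h.2.2.1⟩

lemma Bi.symm_v {a b : Fin n} {α β : ℕ} (h : Bi c a b α β) : Bi c b a α β := by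
  obtain ⟨hab, hcol, ⟨x, hx1, hx2, hx3⟩, ⟨y, hy1, hy2, hy3⟩⟩ := h
  exact ⟨hab.symm, hcol, ⟨x, hx2, hx1, by rwa [Eperm1]⟩, ⟨y, hy2, hy1, by rwa [Eperm1]⟩⟩

/-- all edges on a bichromatic pair take one of its two colors -/
lemma Pbi (hfree : ¬ HasRainbowTight c) {a b : Fin n} {α β : ℕ}
    (h : Bi c a b α β) {z : Fin n} (hza : z ≠ a) (hzb : z ≠ b) :
    c (E a b z) = α ∨ c (E a b z) = β := by
  obtain ⟨hab, hcol, ⟨x, hx1, hx2, hx3⟩, ⟨y, hy1, hy2, hy3⟩⟩ := h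
  by_cases hzx : z = x
  · exact Or.inl (by rw [hzx, hx3])
  by_cases hzy : z = y
  · exact Or.inr (by rw [hzy, hy3])
  by_contra hcon
  push_neg at hcon
  exact Plem hfree hab hx1 hx2 hy1 hy2 hza hzb (by rw [hx3, hy3]; exact hcol)
    (by rw [hx3]; exact fun h => hcon.1 h.symm) (by rw [hy3]; exact fun h => hcon.2 h.symm)

lemma exists_fifth (hn : 5 ≤ n) (a b u v : Fin n) :
    ∃ z : Fin n, z ≠ a ∧ z ≠ b ∧ z ≠ u ∧ z ≠ v := by
  have h4 : ({a, b, u, v} : Finset (Fin n)).card ≤ 4 := by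
    have h1 := Finset.card_insert_le a ({b, u, v} : Finset (Fin n))
    have h2 := Finset.card_insert_le b ({u, v} : Finset (Fin n))
    have h3 := Finset.card_insert_le u ({v} : Finset (Fin n))
    simp only [Finset.card_singleton] at *
    omega
  have : ({a, b, u, v} : Finset (Fin n)) ≠ Finset.univ := by
    intro h
    rw [h, Finset.card_univ, Fintype.card_fin] at h4
    omega
  have hss : ({a, b, u, v} : Finset (Fin n)) ⊂ Finset.univ :=
    lt_of_le_of_ne (Finset.subset_univ _) this
  obtain ⟨z, -, hz⟩ := Finset.exists_of_ssubset hss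
  refine ⟨z, ?_, ?_, ?_, ?_⟩ <;> (intro h; apply hz; simp [h])



lemma Msame {a b : Fin n} {α β γ δ : ℕ} (hfree : ¬ HasRainbowTight c)
    (h1 : Bi c a b α β) (h2 : Bi c a b γ δ)
    (hag : α ≠ γ) (hbg : β ≠ γ) : False := by
  obtain ⟨y, hy1, hy2, hy3⟩ := h2.2.2.1
  rcases Pbi hfree h1 hy1 hy2 with h | h
  · exact hag (h.symm.trans hy3)
  · exact hbg (h.symm.trans hy3)

lemma Mshare {a b v : Fin n} {α β γ δ : ℕ} (hfree : ¬ HasRainbowTight c)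
    (h1 : Bi c a b α β) (h2 : Bi c a v γ δ) (hbv : b ≠ v)
    (hag : α ≠ γ) (had : α ≠ δ) (hbg : β ≠ γ) (hbd : β ≠ δ) : False := by
  have t1 := Pbi hfree h1 (z := v) h2.1.symm hbv.symm
  have t2 := Pbi hfree h2 (z := b) h1.1.symm hbv
  rw [Eperm2 a b v] at t2
  rcases t1 with h | h <;> rcases t2 with h' | h' <;>
    [exact hag (h.symm.trans h'); exact had (h.symm.trans h');
     exact hbg (h.symm.trans h'); exact hbd (h.symm.trans h')]

lemma Mlem (hfree : ¬ HasRainbowTight c) (hn : 5 ≤ n) {a b u v : Fin n}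
    {α β γ δ : ℕ} (h1 : Bi c a b α β) (h2 : Bi c u v γ δ) :
    α = γ ∨ α = δ ∨ β = γ ∨ β = δ := by
  by_contra hcon
  push_neg at hcon
  obtain ⟨hag, had, hbg, hbd⟩ := hcon
  have hab := h1.1
  have huv := h2.1
  by_cases hau : a = u
  · subst hau
    by_cases hbv : b = v
    · subst hbv; exact Msame hfree h1 h2 hag hbg
    · exact Mshare hfree h1 h2 hbv hag had hbg hbd
  by_cases hav : a = v
  · subst hav
    by_cases hbu : b = u
    · subst hbu; exact Msame hfree h1 h2.symm_v hag hbg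
    · exact Mshare hfree h1 h2.symm_v hbu hag had hbg hbd
  by_cases hbu : b = u
  · subst hbu
    exact Mshare hfree h1.symm_v h2 hav hag had hbg hbd
  by_cases hbv : b = v
  · subst hbv
    exact Mshare hfree h1.symm_v h2.symm_v hau hag had hbg hbd
  -- disjoint case
  obtain ⟨z, hza, hzb, hzu, hzv⟩ := exists_fifth hn a b u v
  have hPab : ∀ w, w ≠ a → w ≠ b → c (E a b w) = α ∨ c (E a b w) = β :=
    fun w hw1 hw2 => Pbi hfree h1 hw1 hw2
  have hPuv : ∀ w, w ≠ u → w ≠ v → c (E u v w) = γ ∨ c (E u v w) = δ :=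
    fun w hw1 hw2 => Pbi hfree h2 hw1 hw2
  have hdisj : ∀ X Y : ℕ, (X = α ∨ X = β) → (Y = γ ∨ Y = δ) → X ≠ Y := by
    rintro X Y (rfl | rfl) (rfl | rfl) <;> assumption
  have hXab : c (E a b u) = α ∨ c (E a b u) = β := hPab u (Ne.symm hau) (Ne.symm hbu)
  have hYuv : c (E u v b) = γ ∨ c (E u v b) = δ := hPuv b hbu hbv
  -- Forced1 : ∀ z' outside, c (E a b z') = c (E a b u)
  have Forced1 : ∀ z', z' ≠ a → z' ≠ b → z' ≠ u → z' ≠ v →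
      c (E a b z') = c (E a b u) := by
    intro z' h1' h2' h3' h4'
    have S := path5 hfree huv.symm (Ne.symm hbv) (Ne.symm hav) (Ne.symm h4')
      (Ne.symm hbu) (Ne.symm hau) (Ne.symm h3') hab.symm (Ne.symm h2') (Ne.symm h1')
    rw [show E v u b = E u v b from (Eperm5 b u v).trans (Eperm3 u v b),
      Eperm5 a b u, Eperm1 a b z'] at S
    rcases S with h | h | h
    · exact absurd h (hdisj _ _ hXab hYuv).symm
    · exact absurd h (hdisj _ _ (hPab z' h1' h2') hYuv).symm
    · exact h.symm
  have Forced2 : ∀ z', z' ≠ a → z' ≠ b → z' ≠ u → z' ≠ v →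
      c (E u v z') = c (E u v b) := by
    intro z' h1' h2' h3' h4'
    have S := path5 hfree hab hau hav (Ne.symm h1') hbu hbv (Ne.symm h2')
      huv (Ne.symm h3') (Ne.symm h4')
    rw [show E b u v = E u v b from Eperm3 u v b] at S
    rcases S with h | h | h
    · exact absurd h (hdisj _ _ hXab hYuv)
    · exact absurd h (hdisj _ _ hXab (hPuv z' h3' h4'))
    · exact h.symm
  -- pin down v-witness for the pair {a,b}
  have hvwit : c (E a b v) ≠ c (E a b u) := by
    obtain ⟨x, hx1, hx2, hx3⟩ := h1.2.2.1
    obtain ⟨y, hy1, hy2, hy3⟩ := h1.2.2.2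
    rcases hXab with h | h
    · -- c (E a b u) = α ; the β-witness y must be v
      by_cases hyu : y = u
      · rw [hyu] at hy3; rw [hy3] at h; exact absurd h h1.2.1.symm
      by_cases hyv : y = v
      · subst hyv; rw [hy3, h]; exact h1.2.1.symm
      · have := Forced1 y hy1 hy2 hyu hyv
        rw [hy3, h] at this; exact absurd this h1.2.1.symm
    · by_cases hxu : x = u
      · rw [hxu] at hx3; rw [hx3] at h; exact absurd h h1.2.1
      by_cases hxv : x = v
      · subst hxv; rw [hx3, h]; exact h1.2.1
      · have := Forced1 x hx1 hx2 hxu hxv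
        rw [hx3, h] at this; exact absurd this h1.2.1
  have hawit : c (E u v a) ≠ c (E u v b) := by
    obtain ⟨x, hx1, hx2, hx3⟩ := h2.2.2.1
    obtain ⟨y, hy1, hy2, hy3⟩ := h2.2.2.2
    rcases hYuv with h | h
    · by_cases hyb : y = b
      · rw [hyb] at hy3; rw [hy3] at h; exact absurd h h2.2.1.symm
      by_cases hya : y = a
      · subst hya; rw [hy3, h]; exact h2.2.1.symm
      · have := Forced2 y hya hyb hy1 hy2
        rw [hy3, h] at this; exact absurd this h2.2.1.symm
    · by_cases hxb : x = b
      · rw [hxb] at hx3; rw [hx3] at h; exact absurd h h2.2.1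
      by_cases hxa : x = a
      · subst hxa; rw [hx3, h]; exact h2.2.1
      · have := Forced2 x hxa hxb hx1 hx2
        rw [hx3, h] at this; exact absurd this h2.2.1
  -- final rainbow path (b, a, v, u, z)
  have S := path5 hfree hab.symm hbv hbu (Ne.symm hzb) hav hau
    (Ne.symm hza) huv.symm (Ne.symm hzv) (Ne.symm hzu)
  rw [Eperm1 a b v, show E a v u = E u v a from Eperm5 u v a, Eperm1 u v z] at S
  have hv' : c (E a b v) = α ∨ c (E a b v) = β := hPab v (Ne.symm hav) (Ne.symm hbv)
  have ha' : c (E u v a) = γ ∨ c (E u v a) = δ := hPuv a hau hav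
  rcases S with h | h | h
  · exact hdisj _ _ hv' ha' h
  · exact hdisj _ _ hv' (hPuv z hzu hzv) h
  · rw [Forced2 z hza hzb hzu hzv] at h; exact hawit h



lemma Ocore (hfree : ¬ HasRainbowTight c) (hn : 5 ≤ n) {a b u : Fin n} {α β γ : ℕ}
    (hau : a ≠ u) (h1 : Bi c a b α β) (h2 : Bi c b u β γ) (hag : α ≠ γ) : False := by
  have hab := h1.1
  have hbu := h2.1
  have hβ : c (E a b u) = β := by
    have t1 := Pbi hfree h1 (z := u) (Ne.symm hau) (Ne.symm hbu)
    have t2 := Pbi hfree h2 (z := a) hab hau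
    rw [Eperm4 a b u] at t2
    rcases t1 with h | h
    · rcases t2 with h' | h'
      · exact absurd (h.symm.trans h') h1.2.1
      · exact absurd (h.symm.trans h') hag
    · exact h
  obtain ⟨x, hx1, hx2, hx3⟩ := h1.2.2.1
  obtain ⟨y, hy1, hy2, hy3⟩ := h2.2.2.2
  have hxu : x ≠ u := fun h => h1.2.1 (by rw [← hx3, h, hβ])
  have hya : y ≠ a := fun h =>
    h2.2.1 (hβ.symm.trans (by rw [← hy3, h, Eperm4 a b u]))
  by_cases hxy : x = y
  · subst hxy
    obtain ⟨z, hza, hzb, hzu, hzx⟩ := exists_fifth hn a b u x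
    have step1 : c (E a b z) = β := by
      have S := path5 hfree hxu hx2 hx1 (Ne.symm hzx)
        hbu.symm (Ne.symm hau) (Ne.symm hzu) hab.symm (Ne.symm hzb) (Ne.symm hza)
      rw [show E x u b = E b u x from Eperm5 b u x, Eperm5 a b u, Eperm1 a b z,
        hy3, hβ] at S
      rcases S with h | h | h
      · exact absurd h.symm h2.2.1
      · rcases Pbi hfree h1 hza hzb with h' | h'
        · rw [h'] at h; exact absurd h.symm hag
        · rw [h'] at h; exact absurd h.symm h2.2.1
      · exact h.symm
    have S := path5 hfree hza hzb hzx hzu hab hx1.symm hau hx2.symm hbu hxu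
    rw [Eperm3 a b z, step1, hx3, show E b x u = E b u x from Eperm2 b u x, hy3] at S
    rcases S with h | h | h
    · exact h1.2.1 h.symm
    · exact h2.2.1 h
    · exact hag h
  · have S := path5 hfree hx1 hx2 hxu hxy hab hau hya.symm hbu hy1.symm hy2.symm
    rw [Eperm3 a b x, hx3, hβ, hy3] at S
    rcases S with h | h | h
    · exact h1.2.1 h
    · exact hag h
    · exact h2.2.1 h

lemma Oshare (hfree : ¬ HasRainbowTight c) (hn : 5 ≤ n) {a b u v : Fin n} {α β γ : ℕ}
    (h1 : Bi c a b α β) (h2 : Bi c u v β γ) (hag : α ≠ γ)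
    (hsh : a = u ∨ a = v ∨ b = u ∨ b = v) : False := by
  rcases hsh with h | h | h | h
  · subst h
    by_cases hbv : b = v
    · subst hbv; exact Msame hfree h1 h2.symm_c hag h2.2.1
    · exact Ocore hfree hn hbv h1.symm_v h2 hag
  · subst h
    by_cases hbu : b = u
    · subst hbu; exact Msame hfree h1 h2.symm_v.symm_c hag h2.2.1
    · exact Ocore hfree hn hbu h1.symm_v h2.symm_v hag
  · subst h
    by_cases hav : a = v
    · subst hav; exact Msame hfree h1 h2.symm_v.symm_c hag h2.2.1
    · exact Ocore hfree hn hav h1 h2 hag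
  · subst h
    by_cases hau : a = u
    · subst hau; exact Msame hfree h1 h2.symm_c hag h2.2.1
    · exact Ocore hfree hn hau h1 h2.symm_v hag



lemma Dlem (hfree : ¬ HasRainbowTight c) (hn : 5 ≤ n) {a b u v : Fin n} {α β γ : ℕ}
    (hau : a ≠ u) (hav : a ≠ v) (hbu : b ≠ u) (hbv : b ≠ v)
    (hp : Bi c a b α β) (hr : Bi c u v α γ) (hbg : β ≠ γ) :
    c (E a b u) = α ∧ c (E a b v) = α ∧ c (E a u v) = α ∧ c (E b u v) = α := by
  have hab := hp.1
  have huv := hr.1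
  have hαβ := hp.2.1
  have hαγ := hr.2.1
  obtain ⟨z, hza, hzb, hzu, hzv⟩ := exists_fifth hn a b u v
  have hA : c (E a b u) = α ∨ c (E a b u) = β := Pbi hfree hp (Ne.symm hau) (Ne.symm hbu)
  have hG : c (E b u v) = α ∨ c (E b u v) = γ := by
    have := Pbi hfree hr (z := b) hbu hbv
    rwa [show E u v b = E b u v from (Eperm3 u v b).symm] at this
  rcases hA with hA | hA
  · rcases hG with hG | hG
    · -- case (iv)
      have hδ : c (E a u v) = α := by
        have hδ0 : c (E a u v) = α ∨ c (E a u v) = γ := by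
          have := Pbi hfree hr (z := a) hau hav
          rwa [show E u v a = E a u v from (Eperm3 u v a).symm] at this
        rcases hδ0 with h | h
        · exact h
        · exfalso
          have F : ∀ w, w ≠ a → w ≠ b → w ≠ u → w ≠ v → c (E a b w) = α := by
            intro w h1' h2' h3' h4'
            have S := path5 hfree huv.symm (Ne.symm hav) hbv.symm (Ne.symm h4')
              (Ne.symm hau) hbu.symm (Ne.symm h3') hab (Ne.symm h1') (Ne.symm h2')
            rw [show E v u a = E a u v from Eperm5 a u v,
              show E u a b = E a b u from Eperm3 a b u, h, hA] at S
            rcases S with h' | h' | h'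
            · exact absurd h'.symm hαγ
            · rcases Pbi hfree hp h1' h2' with h'' | h''
              · exact h''
              · rw [h''] at h'; exact absurd h'.symm hbg
            · rcases Pbi hfree hp h1' h2' with h'' | h''
              · exact h''
              · rw [h''] at h'; exact absurd h' hαβ
          obtain ⟨y, hy1, hy2, hy3⟩ := hp.2.2.2
          have hyv : y = v := by
            by_cases hyu : y = u
            · rw [hyu, hA] at hy3; exact absurd hy3 hαβ
            by_cases hyv : y = v
            · exact hyv
            · rw [F y hy1 hy2 hyu hyv] at hy3; exact absurd hy3 hαβ
          have hy3v : c (E a b v) = β := by rw [← hyv]; exact hy3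
          have S := path5 hfree huv (Ne.symm hau) (Ne.symm hbu) (Ne.symm hzu)
            (Ne.symm hav) (Ne.symm hbv) (Ne.symm hzv) hab (Ne.symm hza) (Ne.symm hzb)
          rw [show E u v a = E a u v from (Eperm3 u v a).symm,
            show E v a b = E a b v from Eperm3 a b v,
            show E a b z = E a b z from rfl, h, hy3v, F z hza hzb hzu hzv] at S
          rcases S with h' | h' | h'
          · exact hbg h'.symm
          · exact hαγ h'.symm
          · exact hαβ h'.symm
      refine ⟨hA, ?_, hδ, hG⟩
      rcases Pbi hfree hp (Ne.symm hav) (Ne.symm hbv) with h | h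
      · exact h
      · exfalso
        have F : ∀ w, w ≠ a → w ≠ b → w ≠ u → w ≠ v → c (E u v w) = α := by
          intro w h1' h2' h3' h4'
          have S := path5 hfree hab hav hau (Ne.symm h1') hbv hbu (Ne.symm h2')
            huv.symm (Ne.symm h4') (Ne.symm h3')
          rw [show E b v u = E b u v from Eperm2 b u v,
            show E v u w = E u v w from Eperm1 u v w, h, hG] at S
          rcases S with h' | h' | h'
          · exact absurd h'.symm hαβ
          · rcases Pbi hfree hr h3' h4' with h'' | h''
            · exact h''
            · rw [h''] at h'; exact absurd h' hbg
          · rcases Pbi hfree hr h3' h4' with h'' | h''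
            · exact h''
            · rw [h''] at h'; exact absurd h' hαγ
        obtain ⟨y, hy1, hy2, hy3⟩ := hr.2.2.2
        have hf : c (E u v y) = α := by
          by_cases hya : y = a
          · rw [hya, show E u v a = E a u v from (Eperm3 u v a).symm, hδ]
          by_cases hyb : y = b
          · rw [hyb, show E u v b = E b u v from (Eperm3 u v b).symm, hG]
          · exact F y hya hyb hy1 hy2
        rw [hf] at hy3; exact hαγ hy3
    · -- case (i) : c (E a b u) = α, c (E b u v) = γ
      exfalso
      have F : ∀ w, w ≠ a → w ≠ b → w ≠ u → w ≠ v → c (E a b w) = α := by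
        intro w h1' h2' h3' h4'
        have S := path5 hfree huv.symm hbv.symm (Ne.symm hav) (Ne.symm h4')
          hbu.symm (Ne.symm hau) (Ne.symm h3') hab.symm (Ne.symm h2') (Ne.symm h1')
        rw [show E v u b = E b u v from Eperm5 b u v,
          show E u b a = E a b u from Eperm5 a b u,
          show E b a w = E a b w from Eperm1 a b w, hG, hA] at S
        rcases S with h' | h' | h'
        · exact absurd h' (fun hh => hαγ hh.symm)
        · rcases Pbi hfree hp h1' h2' with h'' | h''
          · exact h''
          · rw [h''] at h'; exact absurd h'.symm hbg
        · rcases Pbi hfree hp h1' h2' with h'' | h''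
          · exact h''
          · rw [h''] at h'; exact absurd h' hαβ
      obtain ⟨y, hy1, hy2, hy3⟩ := hp.2.2.2
      have hyv : y = v := by
        by_cases hyu : y = u
        · rw [hyu, hA] at hy3; exact absurd hy3 hαβ
        by_cases hyv : y = v
        · exact hyv
        · rw [F y hy1 hy2 hyu hyv] at hy3; exact absurd hy3 hαβ
      have hy3v : c (E a b v) = β := by rw [← hyv]; exact hy3
      have S := path5 hfree huv (Ne.symm hbu) (Ne.symm hau) (Ne.symm hzu)
        (Ne.symm hbv) (Ne.symm hav) (Ne.symm hzv) hab.symm (Ne.symm hzb) (Ne.symm hza)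
      rw [show E u v b = E b u v from (Eperm3 u v b).symm,
        show E v b a = E a b v from Eperm5 a b v,
        show E b a z = E a b z from Eperm1 a b z, hG, hy3v, F z hza hzb hzu hzv] at S
      rcases S with h' | h' | h'
      · exact hbg h'.symm
      · exact hαγ h'.symm
      · exact hαβ h'.symm
  · rcases hG with hG | hG
    · -- case (ii) : c (E a b u) = β, c (E b u v) = α
      exfalso
      have F : ∀ w, w ≠ a → w ≠ b → w ≠ u → w ≠ v → c (E u v w) = α := by
        intro w h1' h2' h3' h4'
        have S := path5 hfree hab hau hav (Ne.symm h1') hbu hbv (Ne.symm h2')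
          huv (Ne.symm h3') (Ne.symm h4')
        rw [hA, hG] at S
        rcases S with h' | h' | h'
        · exact absurd h'.symm hαβ
        · rcases Pbi hfree hr h3' h4' with h'' | h''
          · exact h''
          · rw [h''] at h'; exact absurd h' hbg
        · rcases Pbi hfree hr h3' h4' with h'' | h''
          · exact h''
          · rw [h''] at h'; exact absurd h' hαγ
      obtain ⟨y, hy1, hy2, hy3⟩ := hr.2.2.2
      have hya : y = a := by
        by_cases hyb : y = b
        · rw [hyb, show E u v b = E b u v from (Eperm3 u v b).symm, hG] at hy3
          exact absurd hy3 hαγ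
        by_cases hya : y = a
        · exact hya
        · rw [F y hya hyb hy1 hy2] at hy3; exact absurd hy3 hαγ
      have hy3a : c (E u v a) = γ := by rw [← hya]; exact hy3
      have S := path5 hfree hab.symm hbu hbv (Ne.symm hzb) hau hav (Ne.symm hza)
        huv (Ne.symm hzu) (Ne.symm hzv)
      rw [show E b a u = E a b u from Eperm1 a b u,
        show E a u v = E u v a from Eperm3 u v a, hA, hy3a, F z hza hzb hzu hzv] at S
      rcases S with h' | h' | h'
      · exact hbg h'
      · exact hαβ h'.symm
      · exact hαγ h'.symm
    · -- case (iii) : c (E a b u) = β, c (E b u v) = γ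
      exfalso
      have Fab : ∀ w, w ≠ a → w ≠ b → w ≠ u → w ≠ v → c (E a b w) = β := by
        intro w h1' h2' h3' h4'
        have S := path5 hfree huv.symm hbv.symm (Ne.symm hav) (Ne.symm h4')
          hbu.symm (Ne.symm hau) (Ne.symm h3') hab.symm (Ne.symm h2') (Ne.symm h1')
        rw [show E v u b = E b u v from Eperm5 b u v,
          show E u b a = E a b u from Eperm5 a b u,
          show E b a w = E a b w from Eperm1 a b w, hG, hA] at S
        rcases S with h' | h' | h'
        · exact absurd h'.symm hbg
        · rcases Pbi hfree hp h1' h2' with h'' | h''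
          · rw [h''] at h'; exact absurd h'.symm hαγ
          · exact h''
        · exact h'.symm
      have Fuv : ∀ w, w ≠ a → w ≠ b → w ≠ u → w ≠ v → c (E u v w) = γ := by
        intro w h1' h2' h3' h4'
        have S := path5 hfree hab hau hav (Ne.symm h1') hbu hbv (Ne.symm h2')
          huv (Ne.symm h3') (Ne.symm h4')
        rw [hA, hG] at S
        rcases S with h' | h' | h'
        · exact absurd h' hbg
        · rcases Pbi hfree hr h3' h4' with h'' | h''
          · rw [h''] at h'; exact absurd h'.symm hαβ
          · exact h''
        · exact h'.symm
      obtain ⟨x, hx1, hx2, hx3⟩ := hp.2.2.1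
      have hxv : x = v := by
        by_cases hxu : x = u
        · rw [hxu, hA] at hx3; exact absurd hx3.symm hαβ
        by_cases hxv : x = v
        · exact hxv
        · rw [Fab x hx1 hx2 hxu hxv] at hx3; exact absurd hx3.symm hαβ
      have hx3v : c (E a b v) = α := by rw [← hxv]; exact hx3
      obtain ⟨w, hw1, hw2, hw3⟩ := hr.2.2.1
      have hwa : w = a := by
        by_cases hwb : w = b
        · rw [hwb, show E u v b = E b u v from (Eperm3 u v b).symm, hG] at hw3
          exact absurd hw3.symm hαγ
        by_cases hwa : w = a
        · exact hwa
        · rw [Fuv w hwa hwb hw1 hw2] at hw3; exact absurd hw3.symm hαγ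
      have hw3a : c (E u v a) = α := by rw [← hwa]; exact hw3
      have S := path5 hfree hab.symm hbu hbv (Ne.symm hzb) hau hav (Ne.symm hza)
        huv (Ne.symm hzu) (Ne.symm hzv)
      rw [show E b a u = E a b u from Eperm1 a b u,
        show E a u v = E u v a from Eperm3 u v a, hA, hw3a, Fuv z hza hzb hzu hzv] at S
      rcases S with h' | h' | h'
      · exact hαβ h'.symm
      · exact hbg h'
      · exact hαγ h'



lemma Nlem (hfree : ¬ HasRainbowTight c) (hn : 5 ≤ n) {α β γ : ℕ}
    {pa pb qa qb ra rb : Fin n}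
    (h1 : Bi c pa pb α β) (h2 : Bi c qa qb β γ) (h3 : Bi c ra rb α γ)
    (hag : α ≠ γ) : False := by
  have hαβ := h1.2.1
  have hβγ := h2.2.1
  have hpq : ¬(pa = qa ∨ pa = qb ∨ pb = qa ∨ pb = qb) :=
    fun h => Oshare hfree hn h1 h2 hag h
  have hpr : ¬(pa = ra ∨ pa = rb ∨ pb = ra ∨ pb = rb) :=
    fun h => Oshare hfree hn h1.symm_c h3 hβγ h
  have hqr : ¬(qa = ra ∨ qa = rb ∨ qb = ra ∨ qb = rb) :=
    fun h => Oshare hfree hn h2 h3.symm_c hαβ.symm h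
  push_neg at hpq hpr hqr
  obtain ⟨e1, e2, e3, e4⟩ := hpq
  obtain ⟨f1, f2, f3, f4⟩ := hpr
  obtain ⟨g1, g2, g3, g4⟩ := hqr
  have D1 := Dlem hfree hn f1 f2 f3 f4 h1 h3 hβγ
  have D2 := Dlem hfree hn e1 e2 e3 e4 h1.symm_c h2 hag
  have D3 := Dlem hfree hn g1 g2 g3 g4 h2.symm_c h3.symm_c hαβ.symm
  have P1 := path5 hfree h1.1 e1 f2 f1 e3 f4 f3 g2 g1 (Ne.symm h3.1)
  rw [D2.1, show E qa rb ra = E qa ra rb from Eperm2 qa ra rb, D3.2.2.1] at P1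
  have P2 := path5 hfree e3 f4 f3 (Ne.symm h1.1) g2 g1 (Ne.symm e1)
    (Ne.symm h3.1) (Ne.symm f2) (Ne.symm f1)
  rw [show E qa rb ra = E qa ra rb from Eperm2 qa ra rb, D3.2.2.1,
    show E rb ra pa = E pa ra rb from Eperm5 pa ra rb, D1.2.2.1] at P2
  have P3 := path5 hfree (Ne.symm g2) (Ne.symm f4) (Ne.symm f2) (Ne.symm h3.1)
    (Ne.symm e3) (Ne.symm e1) g1 (Ne.symm h1.1) f3 f1
  rw [show E rb qa pb = E pb qa rb from Eperm5 pb qa rb,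
    show E qa pb pa = E pa pb qa from Eperm5 pa pb qa, D2.1,
    show E pb pa ra = E pa pb ra from Eperm1 pa pb ra, D1.1] at P3
  rcases P1 with h | h | h
  · -- x = β
    rcases P2 with h' | h' | h'
    · rw [← h] at h'; exact hβγ h'
    · rw [← h] at h'; exact hαβ h'.symm
    · exact hag h'.symm
  · exact hβγ h
  · -- x = γ  (h : x = γ)
    rcases P3 with h' | h' | h'
    · rw [h] at h'; exact hβγ h'.symm
    · rw [h] at h'; exact hag h'.symm
    · exact hαβ h'.symm



lemma cf_mem {γ : ℕ} : γ ∈ colorFinset c ↔ ∃ e : Finset (Fin n), e.card = 3 ∧ c e = γ := by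
  constructor
  · intro h
    obtain ⟨e, he, hce⟩ := Finset.mem_image.mp h
    exact ⟨e, (Finset.mem_powersetCard_univ).mp he, hce⟩
  · rintro ⟨e, he, hce⟩
    exact Finset.mem_image.mpr ⟨e, (Finset.mem_powersetCard_univ).mpr he, hce⟩

lemma decomp1 {e : Finset (Fin n)} (he : e.card = 3) {w : Fin n} (hw : w ∈ e) :
    ∃ p q, w ≠ p ∧ w ≠ q ∧ p ≠ q ∧ e = E w p q := by
  obtain ⟨x, y, z, hxy, hxz, hyz, rfl⟩ := Finset.card_eq_three.mp he
  simp only [Finset.mem_insert, Finset.mem_singleton] at hw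
  rcases hw with h | h | h
  · exact ⟨y, z, by rw [h]; exact hxy, by rw [h]; exact hxz, hyz, by rw [h]; rfl⟩
  · exact ⟨x, z, by rw [h]; exact hxy.symm, by rw [h]; exact hyz, hxz,
      by rw [h]; exact (Eperm1 x y z).symm⟩
  · exact ⟨x, y, by rw [h]; exact hxz.symm, by rw [h]; exact hyz.symm, hxy,
      by rw [h]; exact (Eperm3 x y z).symm⟩

lemma decomp2 {e : Finset (Fin n)} (he : e.card = 3) {w p : Fin n}
    (hw : w ∈ e) (hp : p ∈ e) (hwp : w ≠ p) :
    ∃ q, q ≠ w ∧ q ≠ p ∧ e = E w p q := by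
  obtain ⟨p', q', h1, h2, h3, rfl⟩ := decomp1 he hw
  have hp' : p = p' ∨ p = q' := by
    simp only [E, Finset.mem_insert, Finset.mem_singleton] at hp
    rcases hp with h | h | h
    · exact absurd h.symm hwp
    · exact Or.inl h
    · exact Or.inr h
  rcases hp' with h | h
  · exact ⟨q', h2.symm, by rw [h]; exact h3.symm, by rw [h]⟩
  · exact ⟨p', h1.symm, by rw [h]; exact h3, by rw [h]; exact Eperm2 w q' p'⟩



lemma conf_to_bi (hfree : ¬ HasRainbowTight c) {e f : Finset (Fin n)}
    (he : e.card = 3) (hf : f.card = 3) (hint : (e ∩ f).Nonempty)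
    (hne : c e ≠ c f) : ∃ a b, Bi c a b (c e) (c f) := by
  obtain ⟨w, hw⟩ := hint
  rw [Finset.mem_inter] at hw
  obtain ⟨p, q, hwp, hwq, hpq, hee⟩ := decomp1 he hw.1
  by_cases hpf : p ∈ f
  · obtain ⟨s, hs1, hs2, hff⟩ := decomp2 hf hw.2 hpf hwp
    have hqs : q ≠ s := by
      rintro rfl
      exact hne (by rw [hee, hff])
    exact ⟨w, p, hwp, hne, ⟨q, hwq.symm, hpq.symm, by rw [← hee]⟩,
      ⟨s, hs1, hs2, by rw [← hff]⟩⟩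
  by_cases hqf : q ∈ f
  · obtain ⟨s, hs1, hs2, hff⟩ := decomp2 hf hw.2 hqf hwq
    exact ⟨w, q, hwq, hne, ⟨p, hwp.symm, hpq, by rw [Eperm2 w p q, ← hee]⟩,
      ⟨s, hs1, hs2, by rw [← hff]⟩⟩
  · obtain ⟨r, s, hwr, hws, hrs, hff⟩ := decomp1 hf hw.2
    have hpr : p ≠ r := by rintro rfl; exact hpf (by rw [hff]; simp [E])
    have hps : p ≠ s := by rintro rfl; exact hpf (by rw [hff]; simp [E])
    have hqr : q ≠ r := by rintro rfl; exact hqf (by rw [hff]; simp [E])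
    have hqs : q ≠ s := by rintro rfl; exact hqf (by rw [hff]; simp [E])
    have S := path5 hfree hpq hwp.symm hpr hps hwq.symm hqr hqs hwr hws hrs
    rw [show E p q w = E w p q from Eperm4 w p q, ← hee, ← hff] at S
    rcases S with h | h | h
    · exact ⟨w, r, hwr, hne, ⟨q, hwq.symm, hqr, by
        rw [show E w r q = E q w r from Eperm4 q w r]; exact h.symm⟩,
        ⟨s, hws.symm, hrs.symm, by rw [← hff]⟩⟩
    · exact absurd h hne
    · exact ⟨q, w, hwq.symm, hne, ⟨p, hpq, hwp.symm, by
        rw [show E q w p = E w p q from Eperm3 w p q, ← hee]⟩,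
        ⟨r, hqr.symm, hwr.symm, h⟩⟩



lemma color_in_bi (hfree : ¬ HasRainbowTight c) (hn : 5 ≤ n)
    (hk : 2 ≤ (colorFinset c).card) {γ : ℕ} (hγ : γ ∈ colorFinset c) :
    ∃ a b δ, Bi c a b γ δ := by
  obtain ⟨g, hg3, hgc⟩ := cf_mem.mp hγ
  obtain ⟨δ', hδ'CF, hδ'ne⟩ := Finset.exists_mem_ne (s := colorFinset c) (by omega) γ
  obtain ⟨f, hf3, hfc⟩ := cf_mem.mp hδ'CF
  by_cases hint : (g ∩ f).Nonempty
  · obtain ⟨a, b, hbi⟩ := conf_to_bi hfree hg3 hf3 hint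
      (by rw [hgc, hfc]; exact hδ'ne.symm)
    rw [hgc, hfc] at hbi
    exact ⟨a, b, δ', hbi⟩
  · obtain ⟨f1, hf1⟩ := Finset.card_pos.mp (by rw [hf3]; norm_num)
    obtain ⟨g1, hg1⟩ := Finset.card_pos.mp (by rw [hg3]; norm_num)
    obtain ⟨g2, g3v, h12, h13, h23, hg_eq⟩ := decomp1 hg3 hg1
    have hf1g : f1 ∉ g := fun h => hint ⟨f1, Finset.mem_inter.mpr ⟨h, hf1⟩⟩
    have h1f : g1 ≠ f1 := fun h => hf1g (h ▸ hg1)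
    have h2f : g2 ≠ f1 := by
      rintro rfl; exact hf1g (by rw [hg_eq]; simp [E])
    have hh3 : (E g1 g2 f1).card = 3 := E_card h12 h1f h2f
    by_cases hch : c (E g1 g2 f1) = γ
    · have hint2 : ((E g1 g2 f1) ∩ f).Nonempty :=
        ⟨f1, Finset.mem_inter.mpr ⟨by simp [E], hf1⟩⟩
      obtain ⟨a, b, hbi⟩ := conf_to_bi hfree hh3 hf3 hint2
        (by rw [hch, hfc]; exact hδ'ne.symm)
      rw [hch, hfc] at hbi
      exact ⟨a, b, δ', hbi⟩
    · have hint2 : (g ∩ (E g1 g2 f1)).Nonempty :=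
        ⟨g1, Finset.mem_inter.mpr ⟨hg1, by simp [E]⟩⟩
      obtain ⟨a, b, hbi⟩ := conf_to_bi hfree hg3 hh3 hint2
        (by rw [hgc]; exact fun hh => hch hh.symm)
      rw [hgc] at hbi
      exact ⟨a, b, c (E g1 g2 f1), hbi⟩

lemma exists_star (hfree : ¬ HasRainbowTight c) (hn : 5 ≤ n)
    (hk3 : 3 ≤ (colorFinset c).card) :
    ∃ χ, χ ∈ colorFinset c ∧ ∀ a b α β, Bi c a b α β → α = χ ∨ β = χ := by
  have hk2 : 2 ≤ (colorFinset c).card := by omega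
  obtain ⟨γ0, hγ0⟩ := Finset.card_pos.mp (by omega : 0 < (colorFinset c).card)
  obtain ⟨a, b, β0, hbi1⟩ := color_in_bi hfree hn hk2 hγ0
  have hβ0CF : β0 ∈ colorFinset c := by
    obtain ⟨y, hy1, hy2, hy3⟩ := hbi1.2.2.2
    exact cf_mem.mpr ⟨E a b y, E_card hbi1.1 hy1.symm hy2.symm, hy3⟩
  obtain ⟨γ, hγ⟩ := Finset.card_pos.mp
    (by
      have e1 := Finset.pred_card_le_card_erase (a := γ0) (s := colorFinset c)
      have e2 := Finset.pred_card_le_card_erase (a := β0) (s := (colorFinset c).erase γ0)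
      omega : 0 < (((colorFinset c).erase γ0).erase β0).card)
  have hγβ0 : γ ≠ β0 := (Finset.mem_erase.mp hγ).1
  have hγγ0 : γ ≠ γ0 := (Finset.mem_erase.mp (Finset.mem_erase.mp hγ).2).1
  have hγCF : γ ∈ colorFinset c := (Finset.mem_erase.mp (Finset.mem_erase.mp hγ).2).2
  obtain ⟨u, v, δ, hbi2⟩ := color_in_bi hfree hn hk2 hγCF
  have hM := Mlem hfree hn hbi1 hbi2
  have hδ : δ = γ0 ∨ δ = β0 := by
    rcases hM with h | h | h | h
    · exact absurd h.symm hγγ0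
    · exact Or.inl h.symm
    · exact absurd h.symm hγβ0
    · exact Or.inr h.symm
  have hδCF : δ ∈ colorFinset c := by
    obtain ⟨y, hy1, hy2, hy3⟩ := hbi2.2.2.2
    exact cf_mem.mpr ⟨E u v y, E_card hbi2.1 hy1.symm hy2.symm, hy3⟩
  refine ⟨δ, hδCF, ?_⟩
  intro s t ε ζ hbi3
  by_contra hcon
  push_neg at hcon
  obtain ⟨hεδ, hζδ⟩ := hcon
  have hM1 := Mlem hfree hn hbi3 hbi1
  have hM2 := Mlem hfree hn hbi3 hbi2
  rcases hδ with rfl | rfl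
  · -- δ = γ0 : sets {γ0, β0} and {γ, γ0}; third must be {β0, γ}
    have hA : ε = β0 ∨ ζ = β0 := by
      rcases hM1 with h | h | h | h
      · exact absurd h hεδ
      · exact Or.inl h
      · exact absurd h hζδ
      · exact Or.inr h
    have hB : ε = γ ∨ ζ = γ := by
      rcases hM2 with h | h | h | h
      · exact Or.inl h
      · exact absurd h hεδ
      · exact Or.inr h
      · exact absurd h hζδ
    have hbi3' : Bi c s t β0 γ := by
      rcases hA with hE | hE
      · rcases hB with hG | hG
        · exact absurd (hE.symm.trans hG) hγβ0.symm
        · have h3 := hbi3; rw [hE, hG] at h3; exact h3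
      · rcases hB with hG | hG
        · have h3 := hbi3; rw [hE, hG] at h3; exact h3.symm_c
        · exact absurd (hE.symm.trans hG) hγβ0.symm
    exact Nlem hfree hn hbi1 hbi3' hbi2.symm_c hγγ0.symm
  · -- δ = β0 : third must be {γ0, γ}
    have hA : ε = γ0 ∨ ζ = γ0 := by
      rcases hM1 with h | h | h | h
      · exact Or.inl h
      · exact absurd h hεδ
      · exact Or.inr h
      · exact absurd h hζδ
    have hB : ε = γ ∨ ζ = γ := by
      rcases hM2 with h | h | h | h
      · exact Or.inl h
      · exact absurd h hεδ
      · exact Or.inr h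
      · exact absurd h hζδ
    have hbi3' : Bi c s t γ0 γ := by
      rcases hA with hE | hE
      · rcases hB with hG | hG
        · exact absurd (hE.symm.trans hG) hγγ0.symm
        · have h3 := hbi3; rw [hE, hG] at h3; exact h3
      · rcases hB with hG | hG
        · have h3 := hbi3; rw [hE, hG] at h3; exact h3.symm_c
        · exact absurd (hE.symm.trans hG) hγγ0.symm
    exact Nlem hfree hn hbi1.symm_c hbi3' hbi2.symm_c hγβ0.symm



lemma getD_eq {l : List ℕ} {i : ℕ} (h : i < l.length) : l.getD i 0 = l[i] := by
  simp [List.getD_eq_getElem?_getD, List.getElem?_eq_getElem h]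

end TPS

/-- Structure theorem for rainbow-`𝒯`-free colorings of `K_n^{(3)}` with at least 3 colors:
after renumbering the `k` colors as `1, …, k` (via `σ`), the vertex set can be partitioned
into `k - 1` parts `P i` (`i ∈ {2, …, k}`) so that the edges inside `P i` have colors in
`{1, i}` with color `i` appearing, and all remaining edges have color `1`. -/
theorem tight_path_structure (n : ℕ) (hn : 5 ≤ n) (c : Finset (Fin n) → ℕ)
    (hfree : ¬ HasRainbowTight c) (k : ℕ) (hk : k = (colorFinset c).card)
    (hk3 : 3 ≤ k) :
    ∃ σ : ℕ → ℕ,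
      Set.InjOn σ (colorFinset c : Set ℕ) ∧
      (∀ e : Finset (Fin n), e.card = 3 → σ (c e) ∈ Finset.Icc 1 k) ∧
      ∃ P : ℕ → Finset (Fin n),
        (∀ i ∈ Finset.Icc 2 k, ∀ j ∈ Finset.Icc 2 k, i ≠ j → Disjoint (P i) (P j)) ∧
        (∀ v : Fin n, ∃ i ∈ Finset.Icc 2 k, v ∈ P i) ∧
        (∀ i ∈ Finset.Icc 2 k,
          (∀ e : Finset (Fin n), e.card = 3 → e ⊆ P i → σ (c e) = 1 ∨ σ (c e) = i) ∧
          (∃ e : Finset (Fin n), e.card = 3 ∧ e ⊆ P i ∧ σ (c e) = i)) ∧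
        (∀ e : Finset (Fin n), e.card = 3 → (∀ i ∈ Finset.Icc 2 k, ¬ e ⊆ P i) →
          σ (c e) = 1) := by
  classical
  obtain ⟨χ, hχCF, hstarBi⟩ := TPS.exists_star hfree hn (hk ▸ hk3)
  have hstar : ∀ e f : Finset (Fin n), e.card = 3 → f.card = 3 → (e ∩ f).Nonempty →
      c e ≠ c f → c e = χ ∨ c f = χ := by
    intro e f he hf hint hne
    obtain ⟨a, b, hbi⟩ := TPS.conf_to_bi hfree he hf hint hne
    exact hstarBi a b _ _ hbi
  have hceCF : ∀ e : Finset (Fin n), e.card = 3 → c e ∈ colorFinset c :=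
    fun e he => TPS.cf_mem.mpr ⟨e, he, rfl⟩
  set L : List ℕ := ((colorFinset c).erase χ).sort (· ≤ ·) with hL
  have hLlen : L.length = k - 1 := by
    rw [hL, Finset.length_sort, Finset.card_erase_of_mem hχCF, hk]
  have hLnd : L.Nodup := Finset.sort_nodup _ _
  have hLmem : ∀ γ, γ ∈ L ↔ (γ ∈ colorFinset c ∧ γ ≠ χ) := by
    intro γ
    rw [hL, Finset.mem_sort, Finset.mem_erase]
    tauto
  set σf : ℕ → ℕ := fun γ => if γ = χ then 1 else List.idxOf γ L + 2 with hσ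
  set core : ℕ → Finset (Fin n) := fun γ =>
    Finset.univ.filter (fun w => ∃ e : Finset (Fin n), e.card = 3 ∧ w ∈ e ∧ c e = γ)
    with hcore
  set leftover : Finset (Fin n) :=
    Finset.univ.filter (fun w => ∀ e : Finset (Fin n), e.card = 3 → w ∈ e → c e = χ)
    with hleft
  set P : ℕ → Finset (Fin n) := fun i =>
    core (L.getD (i - 2) 0) ∪ (if i = 2 then leftover else ∅) with hP
  have hmem_core : ∀ γ (w : Fin n), w ∈ core γ ↔
      ∃ e : Finset (Fin n), e.card = 3 ∧ w ∈ e ∧ c e = γ := by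
    intro γ w; rw [hcore]; simp [Finset.mem_filter]
  have hmem_left : ∀ w : Fin n, w ∈ leftover ↔
      ∀ e : Finset (Fin n), e.card = 3 → w ∈ e → c e = χ := by
    intro w; rw [hleft]; simp [Finset.mem_filter]
  have hcc : ∀ γ δ, γ ≠ χ → δ ≠ χ → γ ≠ δ → ∀ w : Fin n,
      w ∈ core γ → w ∈ core δ → False := by
    intro γ δ hγ hδ hγδ w h1 h2
    obtain ⟨e, he, hwe, hce⟩ := (hmem_core γ w).mp h1
    obtain ⟨f, hf, hwf, hcf⟩ := (hmem_core δ w).mp h2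
    rcases hstar e f he hf ⟨w, Finset.mem_inter.mpr ⟨hwe, hwf⟩⟩
      (by rw [hce, hcf]; exact hγδ) with h | h
    · exact hγ (hce ▸ h)
    · exact hδ (hcf ▸ h)
  have hcl : ∀ γ, γ ≠ χ → ∀ w : Fin n, w ∈ core γ → w ∈ leftover → False := by
    intro γ hγ w h1 h2
    obtain ⟨e, he, hwe, hce⟩ := (hmem_core γ w).mp h1
    exact hγ (hce ▸ (hmem_left w).mp h2 e he hwe)
  have hidx : ∀ i, i ∈ Finset.Icc 2 k → i - 2 < L.length := by
    intro i hi
    rw [Finset.mem_Icc] at hi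
    rw [hLlen]; omega
  have hγi : ∀ i (hi : i ∈ Finset.Icc 2 k),
      L.getD (i - 2) 0 ∈ colorFinset c ∧ L.getD (i - 2) 0 ≠ χ ∧
        σf (L.getD (i - 2) 0) = i := by
    intro i hi
    have h1 : i - 2 < L.length := hidx i hi
    rw [TPS.getD_eq h1]
    have hmem : L[i - 2] ∈ L := List.getElem_mem h1
    have h2 := (hLmem _).mp hmem
    refine ⟨h2.1, h2.2, ?_⟩
    rw [hσ]
    simp only [if_neg h2.2]
    rw [List.Nodup.idxOf_getElem hLnd _ h1]
    rw [Finset.mem_Icc] at hi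
    omega
  refine ⟨σf, ?_, ?_, P, ?_, ?_, ?_, ?_⟩
  · -- InjOn
    intro γ hγ δ hδ heq
    rw [Finset.mem_coe] at hγ hδ
    by_cases h1 : γ = χ <;> by_cases h2 : δ = χ
    · rw [h1, h2]
    · rw [hσ] at heq; simp only [if_pos h1, if_neg h2] at heq; omega
    · rw [hσ] at heq; simp only [if_neg h1, if_pos h2] at heq; omega
    · rw [hσ] at heq
      simp only [if_neg h1, if_neg h2, Nat.add_right_cancel_iff] at heq
      exact (List.idxOf_inj ((hLmem γ).mpr ⟨hγ, h1⟩)).mp heq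
  · -- range
    intro e he
    rw [Finset.mem_Icc, hσ]
    by_cases h1 : c e = χ
    · simp only [if_pos h1]; omega
    · simp only [if_neg h1]
      have : List.idxOf (c e) L < L.length :=
        List.idxOf_lt_length_iff.mpr ((hLmem _).mpr ⟨hceCF e he, h1⟩)
      rw [hLlen] at this
      omega
  · -- disjointness
    intro i hi j hj hij
    have hγij : L.getD (i - 2) 0 ≠ L.getD (j - 2) 0 := by
      rw [TPS.getD_eq (hidx i hi), TPS.getD_eq (hidx j hj)]
      intro h
      have h1 := List.Nodup.idxOf_getElem hLnd _ (hidx i hi)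
      have h2 := List.Nodup.idxOf_getElem hLnd _ (hidx j hj)
      rw [h] at h1
      rw [h1] at h2
      rw [Finset.mem_Icc] at hi hj
      omega
    rw [Finset.disjoint_left]
    intro w hw1 hw2
    rw [hP] at hw1 hw2
    simp only [Finset.mem_union] at hw1 hw2
    have hne1 := (hγi i hi).2.1
    have hne2 := (hγi j hj).2.1
    rcases hw1 with hw1 | hw1 <;> rcases hw2 with hw2 | hw2
    · exact hcc _ _ hne1 hne2 hγij w hw1 hw2
    · by_cases hj2 : j = 2
      · rw [if_pos hj2] at hw2; exact hcl _ hne1 w hw1 hw2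
      · rw [if_neg hj2] at hw2; exact absurd hw2 (Finset.notMem_empty w)
    · by_cases hi2 : i = 2
      · rw [if_pos hi2] at hw1; exact hcl _ hne2 w hw2 hw1
      · rw [if_neg hi2] at hw1; exact absurd hw1 (Finset.notMem_empty w)
    · by_cases hi2 : i = 2
      · have hj2 : j ≠ 2 := by rw [hi2] at hij; exact hij.symm
        rw [if_neg hj2] at hw2; exact absurd hw2 (Finset.notMem_empty w)
      · rw [if_neg hi2] at hw1; exact absurd hw1 (Finset.notMem_empty w)
  · -- cover
    intro v
    by_cases hv : ∀ e : Finset (Fin n), e.card = 3 → v ∈ e → c e = χ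
    · refine ⟨2, Finset.mem_Icc.mpr ⟨le_refl 2, by omega⟩, ?_⟩
      rw [hP]
      simp only [Finset.mem_union, if_pos rfl]
      exact Or.inr ((hmem_left v).mpr hv)
    · push_neg at hv
      obtain ⟨e, he, hve, hce⟩ := hv
      have hceL : c e ∈ L := (hLmem _).mpr ⟨hceCF e he, hce⟩
      set i := List.idxOf (c e) L + 2 with hi
      have hlt : List.idxOf (c e) L < L.length := List.idxOf_lt_length_iff.mpr hceL
      have hiIcc : i ∈ Finset.Icc 2 k := by
        rw [Finset.mem_Icc, hi]
        rw [hLlen] at hlt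
        omega
      refine ⟨i, hiIcc, ?_⟩
      rw [hP]
      simp only [Finset.mem_union]
      left
      have : L.getD (i - 2) 0 = c e := by
        rw [hi]
        simp only [Nat.add_sub_cancel]
        rw [TPS.getD_eq hlt, List.getElem_idxOf hlt]
      rw [this]
      exact (hmem_core _ v).mpr ⟨e, he, hve, rfl⟩
  · -- inside parts
    intro i hi
    constructor
    · intro e he hsub
      by_cases hce : c e = χ
      · left; rw [hσ]; simp [if_pos hce]
      · right
        obtain ⟨v, hve⟩ := Finset.card_pos.mp (by rw [he]; norm_num)
        have hvP := hsub hve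
        rw [hP] at hvP
        simp only [Finset.mem_union] at hvP
        have hvcore : v ∈ core (L.getD (i - 2) 0) := by
          rcases hvP with h | h
          · exact h
          · exfalso
            by_cases hi2 : i = 2
            · rw [if_pos hi2] at h
              exact hce ((hmem_left v).mp h e he hve)
            · rw [if_neg hi2] at h; exact absurd h (Finset.notMem_empty v)
        have hvce : v ∈ core (c e) := (hmem_core _ v).mpr ⟨e, he, hve, rfl⟩
        have hceq : c e = L.getD (i - 2) 0 := by
          by_contra hne
          exact hcc _ _ hce (hγi i hi).2.1 hne v hvce hvcore
        rw [hceq]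
        exact (hγi i hi).2.2
    · obtain ⟨e, he, hce⟩ := TPS.cf_mem.mp (hγi i hi).1
      refine ⟨e, he, ?_, by rw [hce]; exact (hγi i hi).2.2⟩
      intro v hve
      rw [hP]
      simp only [Finset.mem_union]
      left
      exact (hmem_core _ v).mpr ⟨e, he, hve, hce⟩
  · -- crossing
    intro e he hnot
    by_cases hce : c e = χ
    · rw [hσ]; simp [if_pos hce]
    · exfalso
      have hceL : c e ∈ L := (hLmem _).mpr ⟨hceCF e he, hce⟩
      set i := List.idxOf (c e) L + 2 with hi
      have hlt : List.idxOf (c e) L < L.length := List.idxOf_lt_length_iff.mpr hceL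
      have hiIcc : i ∈ Finset.Icc 2 k := by
        rw [Finset.mem_Icc, hi]
        rw [hLlen] at hlt
        omega
      refine hnot i hiIcc ?_
      intro v hve
      rw [hP]
      simp only [Finset.mem_union]
      left
      have : L.getD (i - 2) 0 = c e := by
        rw [hi]
        simp only [Nat.add_sub_cancel]
        rw [TPS.getD_eq hlt, List.getElem_idxOf hlt]
      rw [this]
      exact (hmem_core _ v).mpr ⟨e, he, hve, rfl⟩
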